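/- The projective duality *_P maps the subalgebra CGA₀ to itself and is an involution on it: for every A ∈ CGA₀, A^{*_P} ∈ CGA₀ and (A^{*_P})^{*_P} = A. -/

import Mathlib

open CliffordAlgebra

/-- The matrix of the CGA inner product on `V = ℝ⁵`; indices `0, 1, 2, 3, 4`
correspond to the basis `e₀, e₁, e₂, e₃, e∞`. -/
def Bmat : Matrix (Fin 5) (Fin 5) ℝ :=
  !![0, 0, 0, 0, -1;
     0, 1, 0, 0, 0;
     0, 0, 1, 0, 0;
     0, 0, 0, 1, 0;
     -1, 0, 0, 0, 0]

/-- The CGA quadratic form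
`Q(a e₀ + x₁e₁ + x₂e₂ + x₃e₃ + b e∞) = x₁² + x₂² + x₃² − 2ab`. -/
noncomputable def Q : QuadraticForm ℝ (Fin 5 → ℝ) := Bmat.toQuadraticMap'

/-- The basis vectors of `V = ℝ⁵`: `e 0 = e₀`, `e 1, e 2, e 3` Euclidean, `e 4 = e∞`. -/
def e (i : Fin 5) : Fin 5 → ℝ := Pi.single i 1

/-- The linear map `♯ : V → V` fixing `e₁, e₂, e₃` and sending `e₀ ↦ -e∞`, `e∞ ↦ -e₀`. -/
def sharpV : (Fin 5 → ℝ) →ₗ[ℝ] (Fin 5 → ℝ) where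
  toFun v i := if i = 0 then -(v 4) else if i = 4 then -(v 0) else v i
  map_add' u v := by
    funext i
    by_cases h : i = 0 <;> by_cases h' : i = 4 <;> simp [h, h'] <;> ring
  map_smul' c v := by
    funext i
    by_cases h : i = 0 <;> by_cases h' : i = 4 <;> simp [h, h'] <;> ring

/-- Outer (wedge) product of a multivector with a vector:
`A ∧ v := ½ (A ι(v) + ι(v) α(A))`, where `α` is the grade involution. -/
noncomputable def wedgeVec (A : CliffordAlgebra Q) (v : Fin 5 → ℝ) : CliffordAlgebra Q :=
  (1 / 2 : ℝ) • (A * ι Q v + ι Q v * involute A)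

/-- The conformal pseudoscalar `I_c = (((e₀ ∧ e₁) ∧ e₂) ∧ e₃) ∧ e∞`. -/
noncomputable def Ic : CliffordAlgebra Q :=
  wedgeVec (wedgeVec (wedgeVec (wedgeVec (ι Q (e 0)) (e 1)) (e 2)) (e 3)) (e 4)

/-- The subalgebra `CGA₀` of CGA generated by `ι(e₀), ι(e₁), ι(e₂), ι(e₃)`. -/
noncomputable def CGA₀ : Subalgebra ℝ (CliffordAlgebra Q) :=
  Algebra.adjoin ℝ {ι Q (e 0), ι Q (e 1), ι Q (e 2), ι Q (e 3)}

/-- The projective (PGA) dual `A^{*_P} := ♯((A ∧ e∞) I_c⁻¹)`, with `I_c⁻¹ = -I_c`,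
expressed relative to a realization `F` of the involution `♯` on the Clifford algebra
(i.e. `F` is the algebra endomorphism induced by the isometry `♯ : V → V`,
characterized by `F (ι v) = ι (♯ v)`). -/
noncomputable def dualP (F : CliffordAlgebra Q →ₐ[ℝ] CliffordAlgebra Q)
    (A : CliffordAlgebra Q) : CliffordAlgebra Q :=
  F (wedgeVec A (e 4) * (-Ic))

lemma Q_apply (v : Fin 5 → ℝ) :
    Q v = v 1 * v 1 + v 2 * v 2 + v 3 * v 3 - 2 * (v 0 * v 4) := by
  simp [Q, Matrix.toQuadraticMap', LinearMap.BilinMap.toQuadraticMap_apply,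
    Matrix.toLinearMap₂'_apply', dotProduct, Matrix.toQuadraticForm', Matrix.mulVec, Fin.sum_univ_five, Bmat, Matrix.vecHead, Matrix.vecTail]
  ring

lemma polar_apply (u v : Fin 5 → ℝ) :
    QuadraticMap.polar Q u v
      = 2*(u 1*v 1 + u 2*v 2 + u 3*v 3) - 2*(u 0*v 4 + u 4*v 0) := by
  simp [QuadraticMap.polar, Q_apply]
  ring

lemma e_apply (i j : Fin 5) : e i j = if j = i then 1 else 0 := Pi.single_apply i 1 j

/-- abbreviations for the five generators -/

noncomputable def nv : CliffordAlgebra Q := ι Q (e 0)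

noncomputable def av : CliffordAlgebra Q := ι Q (e 1)

noncomputable def bv : CliffordAlgebra Q := ι Q (e 2)

noncomputable def cv : CliffordAlgebra Q := ι Q (e 3)

noncomputable def fv : CliffordAlgebra Q := ι Q (e 4)

lemma anticomm (i j : Fin 5) (h : QuadraticMap.polar Q (e i) (e j) = 0) :
    ι Q (e j) * ι Q (e i) = -(ι Q (e i) * ι Q (e j)) := by
  have h2 := CliffordAlgebra.ι_mul_ι_add_swap (Q := Q) (e i) (e j)
  rw [h, map_zero] at h2
  exact eq_neg_of_add_eq_zero_right h2

-- squares

lemma nv_sq : nv * nv = 0 := by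
  rw [nv, ι_sq_scalar, show Q (e 0) = 0 by simp [Q_apply, e_apply], map_zero]

lemma fv_sq : fv * fv = 0 := by
  rw [fv, ι_sq_scalar, show Q (e 4) = 0 by simp [Q_apply, e_apply], map_zero]

lemma av_sq : av * av = 1 := by
  rw [av, ι_sq_scalar, show Q (e 1) = 1 by simp [Q_apply, e_apply], map_one]

lemma bv_sq : bv * bv = 1 := by
  rw [bv, ι_sq_scalar, show Q (e 2) = 1 by simp [Q_apply, e_apply], map_one]

lemma cv_sq : cv * cv = 1 := by
  rw [cv, ι_sq_scalar, show Q (e 3) = 1 by simp [Q_apply, e_apply], map_one]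

-- anticommutations (orientation: move n left, f right, sort a<b<c)

lemma swap_an : av * nv = -(nv * av) := anticomm 0 1 (by simp [polar_apply, e_apply])

lemma swap_bn : bv * nv = -(nv * bv) := anticomm 0 2 (by simp [polar_apply, e_apply])

lemma swap_cn : cv * nv = -(nv * cv) := anticomm 0 3 (by simp [polar_apply, e_apply])

lemma swap_fa : fv * av = -(av * fv) := anticomm 1 4 (by simp [polar_apply, e_apply])

lemma swap_fb : fv * bv = -(bv * fv) := anticomm 2 4 (by simp [polar_apply, e_apply])

lemma swap_fc : fv * cv = -(cv * fv) := anticomm 3 4 (by simp [polar_apply, e_apply])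

lemma swap_ba : bv * av = -(av * bv) := anticomm 1 2 (by simp [polar_apply, e_apply])

lemma swap_ca : cv * av = -(av * cv) := anticomm 1 3 (by simp [polar_apply, e_apply])

lemma swap_cb : cv * bv = -(bv * cv) := anticomm 2 3 (by simp [polar_apply, e_apply])

lemma swap_fn : fv * nv = -2 - nv * fv := by
  have h2 := CliffordAlgebra.ι_mul_ι_comm (Q := Q) (e 4) (e 0)
  rw [show QuadraticMap.polar Q (e 4) (e 0) = -2 by simp [polar_apply, e_apply]] at h2
  rw [← nv, ← fv] at h2
  rw [h2]
  simp [map_ofNat]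

/-! ### Generalized (right-associated) rewriting lemmas -/

lemma gswap {x y z : CliffordAlgebra Q} (h : x * y = y * z) (w : CliffordAlgebra Q) :
    x * (y * w) = y * (z * w) := by rw [← mul_assoc, h, mul_assoc]

lemma gswapneg {x y : CliffordAlgebra Q} (h : x * y = -(y * x)) (w : CliffordAlgebra Q) :
    x * (y * w) = -(y * (x * w)) := by rw [← mul_assoc, h, neg_mul, mul_assoc]

lemma gan (w) : av * (nv * w) = -(nv * (av * w)) := gswapneg swap_an w

lemma gbn (w) : bv * (nv * w) = -(nv * (bv * w)) := gswapneg swap_bn w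

lemma gcn (w) : cv * (nv * w) = -(nv * (cv * w)) := gswapneg swap_cn w

lemma gfa (w) : fv * (av * w) = -(av * (fv * w)) := gswapneg swap_fa w

lemma gfb (w) : fv * (bv * w) = -(bv * (fv * w)) := gswapneg swap_fb w

lemma gfc (w) : fv * (cv * w) = -(cv * (fv * w)) := gswapneg swap_fc w

lemma gba (w) : bv * (av * w) = -(av * (bv * w)) := gswapneg swap_ba w

lemma gca (w) : cv * (av * w) = -(av * (cv * w)) := gswapneg swap_ca w

lemma gcb (w) : cv * (bv * w) = -(bv * (cv * w)) := gswapneg swap_cb w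

lemma gfn (w) : fv * (nv * w) = -(2 * w) - nv * (fv * w) := by
  rw [← mul_assoc, swap_fn, sub_mul, mul_assoc]
  simp [neg_mul]

lemma gnn (w) : nv * (nv * w) = 0 := by rw [← mul_assoc, nv_sq, zero_mul]

lemma gff (w) : fv * (fv * w) = 0 := by rw [← mul_assoc, fv_sq, zero_mul]

lemma gaa (w) : av * (av * w) = w := by rw [← mul_assoc, av_sq, one_mul]

lemma gbb (w) : bv * (bv * w) = w := by rw [← mul_assoc, bv_sq, one_mul]

lemma gcc (w) : cv * (cv * w) = w := by rw [← mul_assoc, cv_sq, one_mul]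

lemma involute_nv : involute nv = -nv := involute_ι (e 0)

lemma involute_av : involute av = -av := involute_ι (e 1)

lemma involute_bv : involute bv = -bv := involute_ι (e 2)

lemma involute_cv : involute cv = -cv := involute_ι (e 3)

lemma involute_fv : involute fv = -fv := involute_ι (e 4)

/-! ### The Euclidean subalgebra `EE` -/

noncomputable def EE : Subalgebra ℝ (CliffordAlgebra Q) := Algebra.adjoin ℝ {av, bv, cv}

lemma EE_key : ∀ A ∈ EE, involute A ∈ EE ∧ nv * A = involute A * nv ∧ fv * A = involute A * fv := by
  intro A hA
  induction hA using Algebra.adjoin_induction with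
  | mem x hx =>
    have hx' : involute x = -x ∧ (x * nv = -(nv * x)) ∧ (x * fv = -(fv * x)) := by
      rcases hx with h | h | h <;> subst h
      · exact ⟨involute_av, swap_an, by rw [swap_fa, neg_neg]⟩
      · exact ⟨involute_bv, swap_bn, by rw [swap_fb, neg_neg]⟩
      · exact ⟨involute_cv, swap_cn, by rw [swap_fc, neg_neg]⟩
    refine ⟨?_, ?_, ?_⟩
    · rw [hx'.1]; exact neg_mem (Algebra.subset_adjoin hx)
    · rw [hx'.1, neg_mul, hx'.2.1, neg_neg]
    · rw [hx'.1, neg_mul, hx'.2.2, neg_neg]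
  | algebraMap r =>
    refine ⟨?_, ?_, ?_⟩
    · rw [AlgHom.commutes]; exact Subalgebra.algebraMap_mem _ r
    · rw [AlgHom.commutes, Algebra.commutes]
    · rw [AlgHom.commutes, Algebra.commutes]
  | add x y hx hy ihx ihy =>
    refine ⟨by rw [map_add]; exact add_mem ihx.1 ihy.1, ?_, ?_⟩
    · rw [map_add, mul_add, add_mul, ihx.2.1, ihy.2.1]
    · rw [map_add, mul_add, add_mul, ihx.2.2, ihy.2.2]
  | mul x y hx hy ihx ihy =>
    refine ⟨by rw [map_mul]; exact mul_mem ihx.1 ihy.1, ?_, ?_⟩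
    · rw [map_mul, ← mul_assoc, ihx.2.1, mul_assoc, ihy.2.1, ← mul_assoc]
    · rw [map_mul, ← mul_assoc, ihx.2.2, mul_assoc, ihy.2.2, ← mul_assoc]

/-! ### sharp on basis vectors, F on generators -/

lemma sharpV_e1 : sharpV (e 1) = e 1 := by
  funext i; simp only [sharpV, LinearMap.coe_mk, AddHom.coe_mk, e]
  fin_cases i <;> simp [Pi.single_apply]

lemma sharpV_e2 : sharpV (e 2) = e 2 := by
  funext i; simp only [sharpV, LinearMap.coe_mk, AddHom.coe_mk, e]
  fin_cases i <;> simp [Pi.single_apply]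

lemma sharpV_e3 : sharpV (e 3) = e 3 := by
  funext i; simp only [sharpV, LinearMap.coe_mk, AddHom.coe_mk, e]
  fin_cases i <;> simp [Pi.single_apply]

lemma sharpV_e4 : sharpV (e 4) = -(e 0) := by
  funext i; simp only [sharpV, LinearMap.coe_mk, AddHom.coe_mk, e]
  fin_cases i <;> simp [Pi.single_apply]

section Fhom

variable (F : CliffordAlgebra Q →ₐ[ℝ] CliffordAlgebra Q)
  (hF : ∀ v : Fin 5 → ℝ, F (ι Q v) = ι Q (sharpV v))

include hF

lemma F_av : F av = av := by rw [av, hF, sharpV_e1]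

lemma F_bv : F bv = bv := by rw [bv, hF, sharpV_e2]

lemma F_cv : F cv = cv := by rw [cv, hF, sharpV_e3]

lemma F_fv : F fv = -nv := by rw [fv, hF, sharpV_e4, map_neg, nv]

lemma F_EE : ∀ A ∈ EE, F A = A := by
  intro A hA
  induction hA using Algebra.adjoin_induction with
  | mem x hx => rcases hx with h | h | h <;> subst h
                · exact F_av F hF
                · exact F_bv F hF
                · exact F_cv F hF
  | algebraMap r => rw [AlgHom.commutes]
  | add x y hx hy ihx ihy => rw [map_add, ihx, ihy]
  | mul x y hx hy ihx ihy => rw [map_mul, ihx, ihy]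

end Fhom

/-! ### EE sits inside CGA₀, and decomposition of CGA₀ -/

lemma EE_le : EE ≤ CGA₀ := by
  apply Algebra.adjoin_le
  intro x hx
  rcases hx with h | h | h <;> subst h <;>
    [exact Algebra.subset_adjoin (by simp [av]);
     exact Algebra.subset_adjoin (by simp [bv]);
     exact Algebra.subset_adjoin (by simp [cv])]

lemma nv_mem : nv ∈ CGA₀ := Algebra.subset_adjoin (by simp [nv])

lemma decomp : ∀ A ∈ CGA₀, ∃ A₀ ∈ EE, ∃ A₁ ∈ EE, A = A₀ + nv * A₁ := by
  intro A hA
  induction hA using Algebra.adjoin_induction with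
  | mem x hx =>
    rcases hx with h | h | h | h <;> subst h
    · exact ⟨0, zero_mem _, 1, one_mem _, by rw [← nv]; simp⟩
    · exact ⟨av, Algebra.subset_adjoin (by simp), 0, zero_mem _, by rw [← av]; simp⟩
    · exact ⟨bv, Algebra.subset_adjoin (by simp), 0, zero_mem _, by rw [← bv]; simp⟩
    · exact ⟨cv, Algebra.subset_adjoin (by simp), 0, zero_mem _, by rw [← cv]; simp⟩
  | algebraMap r =>
    exact ⟨algebraMap ℝ _ r, Subalgebra.algebraMap_mem _ r, 0, zero_mem _, by simp⟩
  | add x y hx hy ihx ihy =>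
    obtain ⟨A₀, h₀, A₁, h₁, rfl⟩ := ihx
    obtain ⟨C₀, g₀, C₁, g₁, rfl⟩ := ihy
    exact ⟨A₀ + C₀, add_mem h₀ g₀, A₁ + C₁, add_mem h₁ g₁, by noncomm_ring⟩
  | mul x y hx hy ihx ihy =>
    obtain ⟨A₀, h₀, A₁, h₁, rfl⟩ := ihx
    obtain ⟨C₀, g₀, C₁, g₁, rfl⟩ := ihy
    refine ⟨A₀ * C₀, mul_mem h₀ g₀,
      involute A₀ * C₁ + A₁ * C₀, add_mem (mul_mem (EE_key A₀ h₀).1 g₁) (mul_mem h₁ g₀), ?_⟩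
    have k₀ : A₀ * nv = nv * involute A₀ := by
      have := (EE_key (involute A₀) (EE_key A₀ h₀).1).2.1
      rw [involute_involute] at this; exact this.symm
    have k₁ : A₁ * nv = nv * involute A₁ := by
      have := (EE_key (involute A₁) (EE_key A₁ h₁).1).2.1
      rw [involute_involute] at this; exact this.symm
    calc (A₀ + nv * A₁) * (C₀ + nv * C₁)
        = A₀ * C₀ + (A₀ * nv) * C₁ + nv * ((A₁ * nv) * C₁) + nv * (A₁ * C₀) := by
          noncomm_ring
      _ = A₀ * C₀ + nv * (involute A₀ * C₁) + (nv * nv) * (involute A₁ * C₁)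
            + nv * (A₁ * C₀) := by rw [k₀, k₁]; noncomm_ring
      _ = A₀ * C₀ + nv * (involute A₀ * C₁ + A₁ * C₀) := by rw [nv_sq]; noncomm_ring

lemma nv_def : ι Q (e 0) = nv := rfl

lemma av_def : ι Q (e 1) = av := rfl

lemma bv_def : ι Q (e 2) = bv := rfl

lemma cv_def : ι Q (e 3) = cv := rfl

lemma fv_def : ι Q (e 4) = fv := rfl

lemma gfn' (w : CliffordAlgebra Q) :
    fv * (nv * w) = -((2:ℝ) • w) - nv * (fv * w) := by
  rw [gfn]
  congr 1

lemma Ic_eq : Ic = nv * (av * (bv * (cv * fv))) - av * (bv * cv) := by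
  simp only [Ic, wedgeVec, nv_def, av_def, bv_def, cv_def, fv_def]
  simp only [map_add, map_smul, map_mul, involute_nv, involute_av, involute_bv, involute_cv,
    involute_fv, mul_add, add_mul, mul_neg, neg_mul, neg_neg, mul_assoc, smul_mul_assoc,
    mul_smul_comm, mul_one, one_mul, smul_add, smul_neg, smul_smul, sub_mul, mul_sub, smul_sub,
    gan, gbn, gcn, gfa, gfb, gfc, gba, gca, gcb, gfn', gnn, gff, gaa, gbb, gcc,
    swap_an, swap_bn, swap_cn, swap_fa, swap_fb, swap_fc, swap_ba, swap_ca, swap_cb,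
    nv_sq, fv_sq, av_sq, bv_sq, cv_sq, mul_zero, zero_mul, add_zero, zero_add, smul_zero,
    neg_zero, sub_zero, zero_sub, neg_neg]
  module

lemma gmove {x y z : CliffordAlgebra Q} (h : x * y = z * x) (w : CliffordAlgebra Q) :
    x * (y * w) = z * (x * w) := by rw [← mul_assoc, h, mul_assoc]

lemma dual_formula (F : CliffordAlgebra Q →ₐ[ℝ] CliffordAlgebra Q)
    (hF : ∀ v : Fin 5 → ℝ, F (ι Q v) = ι Q (sharpV v)) :
    ∀ A₀ ∈ EE, ∀ A₁ ∈ EE,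
      dualP F (A₀ + nv * A₁)
        = involute A₁ * (av * (bv * cv)) + nv * (involute A₀ * (av * (bv * cv))) := by
  intro A₀ h₀ A₁ h₁
  have m₀ := (EE_key A₀ h₀).1
  have m₁ := (EE_key A₁ h₁).1
  have b1 : nv * A₀ = involute A₀ * nv := (EE_key A₀ h₀).2.1
  have b2 : fv * A₀ = involute A₀ * fv := (EE_key A₀ h₀).2.2
  have b3 : nv * involute A₀ = A₀ * nv := by
    have := (EE_key _ m₀).2.1; rwa [involute_involute] at this
  have b4 : fv * involute A₀ = A₀ * fv := by
    have := (EE_key _ m₀).2.2; rwa [involute_involute] at this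
  have b5 : nv * A₁ = involute A₁ * nv := (EE_key A₁ h₁).2.1
  have b6 : fv * A₁ = involute A₁ * fv := (EE_key A₁ h₁).2.2
  have b7 : nv * involute A₁ = A₁ * nv := by
    have := (EE_key _ m₁).2.1; rwa [involute_involute] at this
  have b8 : fv * involute A₁ = A₁ * fv := by
    have := (EE_key _ m₁).2.2; rwa [involute_involute] at this
  have hpre : wedgeVec (A₀ + nv * A₁) (e 4) * (-Ic)
      = A₀ * (av * (bv * (cv * fv))) + involute A₁ * (av * (bv * cv)) := by
    simp only [wedgeVec, Ic_eq, nv_def, av_def, bv_def, cv_def, fv_def,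
      map_add, map_smul, map_mul, involute_nv, involute_av, involute_bv, involute_cv,
      involute_fv, involute_involute, mul_add, add_mul, mul_neg, neg_mul, neg_neg, mul_assoc,
      smul_mul_assoc, mul_smul_comm, mul_one, one_mul, smul_add, smul_neg, smul_smul, sub_mul,
      mul_sub, smul_sub, neg_sub, neg_add,
      gmove b1, gmove b2, gmove b3, gmove b4, gmove b5, gmove b6, gmove b7, gmove b8,
      b1, b2, b3, b4, b5, b6, b7, b8,
      gan, gbn, gcn, gfa, gfb, gfc, gba, gca, gcb, gfn', gnn, gff, gaa, gbb, gcc,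
      swap_an, swap_bn, swap_cn, swap_fa, swap_fb, swap_fc, swap_ba, swap_ca, swap_cb,
      nv_sq, fv_sq, av_sq, bv_sq, cv_sq, mul_zero, zero_mul, add_zero, zero_add, smul_zero,
      neg_zero, sub_zero, zero_sub]
    module
  rw [dualP, hpre]
  simp only [map_add, map_mul, F_av F hF, F_bv F hF, F_cv F hF, F_fv F hF,
    F_EE F hF A₀ h₀, F_EE F hF _ m₁]
  simp only [mul_neg, neg_mul, neg_neg,
    gmove b1, gmove b2, gmove b3, gmove b4, gmove b5, gmove b6, gmove b7, gmove b8,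
    b1, b2, b3, b4, b5, b6, b7, b8, mul_assoc,
    gan, gbn, gcn, gfa, gfb, gfc, gba, gca, gcb, gnn, gff, gaa, gbb, gcc,
    swap_an, swap_bn, swap_cn, swap_fa, swap_fb, swap_fc, swap_ba, swap_ca, swap_cb]
  module

lemma E3_mem : av * (bv * cv) ∈ EE :=
  mul_mem (Algebra.subset_adjoin (by simp))
    (mul_mem (Algebra.subset_adjoin (by simp)) (Algebra.subset_adjoin (by simp)))

/-- The projective duality `*_P` maps `CGA₀` to itself and is an
involution on it: for every `A ∈ CGA₀`, `A^{*_P} ∈ CGA₀` and `(A^{*_P})^{*_P} = A`. -/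
theorem dualP_involution (F : CliffordAlgebra Q →ₐ[ℝ] CliffordAlgebra Q)
    (hF : ∀ v : Fin 5 → ℝ, F (ι Q v) = ι Q (sharpV v)) :
    ∀ A ∈ CGA₀, dualP F A ∈ CGA₀ ∧ dualP F (dualP F A) = A := by
  intro A hA
  obtain ⟨A₀, h₀, A₁, h₁, rfl⟩ := decomp A hA
  have m₀ := (EE_key A₀ h₀).1
  have m₁ := (EE_key A₁ h₁).1
  have hB₀ : involute A₁ * (av * (bv * cv)) ∈ EE := mul_mem m₁ E3_mem
  have hB₁ : involute A₀ * (av * (bv * cv)) ∈ EE := mul_mem m₀ E3_mem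
  have hD := dual_formula F hF A₀ h₀ A₁ h₁
  constructor
  · rw [hD]
    exact add_mem (EE_le hB₀) (mul_mem nv_mem (EE_le hB₁))
  · rw [hD, dual_formula F hF _ hB₀ _ hB₁]
    have b5 : nv * A₁ = involute A₁ * nv := (EE_key A₁ h₁).2.1
    have b7 : nv * involute A₁ = A₁ * nv := by
      have := (EE_key _ m₁).2.1; rwa [involute_involute] at this
    simp only [map_mul, involute_involute, involute_av, involute_bv, involute_cv,
      mul_neg, neg_mul, neg_neg, mul_assoc, mul_one, one_mul,
      gmove b5, gmove b7, b5, b7,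
      gba, gca, gcb, gaa, gbb, gcc, av_sq, bv_sq, cv_sq,
      swap_ba, swap_ca, swap_cb]
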